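/- Let K be a connected reductive group whose root system is a product of factors of type A or D (with the coroot lattice as specified for the symmetric subgroup K of a group G of type A₁, D₂ₙ, E₇, E₈). Then no nonzero element λ of the coroot lattice of K is minuscule for the ambient group, i.e. there is no nonzero λ in ℤΦ_K^∨ such that ⟨γ, λ⟩ ∈ {−1, 0, 1} for all roots γ of K. -/

import Mathlib

/-! STATEMENT 9: Let `K` be a connected reductive group whose root system is a product of
factors of type A or D.  Then no nonzero element `λ` of the coroot lattice of `K` is
minuscule, i.e. there is no nonzero `λ ∈ ℤΦ_K^∨` such that `⟨γ, λ⟩ ∈ {−1, 0, 1}` for all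
roots `γ` of `K`.  (For the simply-laced types A and D with the normalization in which all
roots have square length 2, coroots are identified with roots and the pairing `⟨γ, λ⟩` is
the inner product `⟪γ, λ⟫`.) -/

open scoped RealInnerProductSpace

/-- The standard root system of type Aₘ₋₁ in ℝᵐ: the vectors `eᵢ − eⱼ`, `i ≠ j`. -/
def typeARoots (m : ℕ) : Set (EuclideanSpace ℝ (Fin m)) :=
  {v | ∃ i j : Fin m, i ≠ j ∧
    v = EuclideanSpace.single i (1 : ℝ) - EuclideanSpace.single j (1 : ℝ)}

/-- The standard root system of type Dₘ in ℝᵐ: the vectors `±eᵢ ± eⱼ`, `i ≠ j`. -/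
def typeDRoots (m : ℕ) : Set (EuclideanSpace ℝ (Fin m)) :=
  {v | ∃ i j : Fin m, ∃ s t : ℝ, (s = 1 ∨ s = -1) ∧ (t = 1 ∨ t = -1) ∧ i ≠ j ∧
    v = s • EuclideanSpace.single i (1 : ℝ) + t • EuclideanSpace.single j (1 : ℝ)}

lemma coordsA {m : ℕ} {ν : EuclideanSpace ℝ (Fin m)}
    (h : ν ∈ Submodule.span ℤ (typeARoots m)) :
    ∃ w : Fin m → ℤ, (∀ k, ν k = (w k : ℝ)) ∧ ∑ k, w k = 0 := by
  induction h using Submodule.span_induction with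
  | mem x hx =>
    obtain ⟨i, j, hij, rfl⟩ := hx
    refine ⟨fun k => (if k = i then 1 else 0) - (if k = j then 1 else 0), fun k => ?_, ?_⟩
    · rcases eq_or_ne k i with hki | hki <;> rcases eq_or_ne k j with hkj | hkj
      · exact absurd (hki.symm.trans hkj) hij
      all_goals
        simp [PiLp.sub_apply, EuclideanSpace.single_apply, hki, hkj]
    · rw [Finset.sum_sub_distrib]
      simp
  | zero => exact ⟨0, by simp, by simp⟩
  | add x y hx hy ihx ihy =>
    obtain ⟨w1, h1, s1⟩ := ihx
    obtain ⟨w2, h2, s2⟩ := ihy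
    refine ⟨w1 + w2, fun k => ?_, ?_⟩
    · rw [PiLp.add_apply, h1, h2, Pi.add_apply]
      push_cast
      ring
    · simp only [Pi.add_apply]
      rw [Finset.sum_add_distrib, s1, s2]
      ring
  | smul a x hx ih =>
    obtain ⟨w, h1, s1⟩ := ih
    refine ⟨a • w, fun k => ?_, ?_⟩
    · rw [PiLp.smul_apply, h1, Pi.smul_apply, zsmul_eq_mul, zsmul_eq_mul]
      push_cast
      ring
    · simp only [Pi.smul_apply, smul_eq_mul]
      rw [← Finset.mul_sum, s1, mul_zero]

lemma coordsD {m : ℕ} {ν : EuclideanSpace ℝ (Fin m)}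
    (h : ν ∈ Submodule.span ℤ (typeDRoots m)) :
    ∃ w : Fin m → ℤ, (∀ k, ν k = (w k : ℝ)) ∧ Even (∑ k, w k) := by
  induction h using Submodule.span_induction with
  | mem x hx =>
    obtain ⟨i, j, s, t, hs, ht, hij, rfl⟩ := hx
    obtain ⟨a, ha, ha'⟩ : ∃ a : ℤ, s = (a : ℝ) ∧ (a = 1 ∨ a = -1) := by
      rcases hs with h | h
      exacts [⟨1, by norm_num [h], Or.inl rfl⟩, ⟨-1, by norm_num [h], Or.inr rfl⟩]
    obtain ⟨b, hb, hb'⟩ : ∃ b : ℤ, t = (b : ℝ) ∧ (b = 1 ∨ b = -1) := by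
      rcases ht with h | h
      exacts [⟨1, by norm_num [h], Or.inl rfl⟩, ⟨-1, by norm_num [h], Or.inr rfl⟩]
    refine ⟨fun k => a * (if k = i then 1 else 0) + b * (if k = j then 1 else 0),
      fun k => ?_, ?_⟩
    · rcases eq_or_ne k i with hki | hki <;> rcases eq_or_ne k j with hkj | hkj
      · exact absurd (hki.symm.trans hkj) hij
      all_goals
        simp [PiLp.add_apply, PiLp.smul_apply, EuclideanSpace.single_apply, ha, hb, hki, hkj]
    · have h0 : ∑ k, (a * (if k = i then (1:ℤ) else 0) + b * (if k = j then 1 else 0))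
          = a + b := by
        rw [Finset.sum_add_distrib, ← Finset.mul_sum, ← Finset.mul_sum]
        simp
      rw [h0]
      rcases ha' with rfl | rfl <;> rcases hb' with rfl | rfl <;> decide
  | zero => exact ⟨0, by simp, by simp⟩
  | add x y hx hy ihx ihy =>
    obtain ⟨w1, h1, s1⟩ := ihx
    obtain ⟨w2, h2, s2⟩ := ihy
    refine ⟨w1 + w2, fun k => ?_, ?_⟩
    · rw [PiLp.add_apply, h1, h2, Pi.add_apply]
      push_cast
      ring
    · simp only [Pi.add_apply]
      rw [Finset.sum_add_distrib]
      exact s1.add s2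
  | smul a x hx ih =>
    obtain ⟨w, h1, s1⟩ := ih
    refine ⟨a • w, fun k => ?_, ?_⟩
    · rw [PiLp.smul_apply, h1, Pi.smul_apply, zsmul_eq_mul, zsmul_eq_mul]
      push_cast
      ring
    · simp only [Pi.smul_apply, smul_eq_mul]
      rw [← Finset.mul_sum]
      exact s1.mul_left a

lemma pairA {m : ℕ} (i j : Fin m) (ν : EuclideanSpace ℝ (Fin m)) :
    ⟪EuclideanSpace.single i (1:ℝ) - EuclideanSpace.single j (1:ℝ), ν⟫ = ν i - ν j := by
  rw [inner_sub_left, EuclideanSpace.inner_single_left, EuclideanSpace.inner_single_left]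
  simp

lemma pairD {m : ℕ} (i j : Fin m) (s t : ℝ) (ν : EuclideanSpace ℝ (Fin m)) :
    ⟪s • EuclideanSpace.single i (1:ℝ) + t • EuclideanSpace.single j (1:ℝ), ν⟫
      = s * ν i + t * ν j := by
  rw [inner_add_left, real_inner_smul_left, real_inner_smul_left,
    EuclideanSpace.inner_single_left, EuclideanSpace.inner_single_left]
  simp

lemma lemA {m : ℕ} {ν : EuclideanSpace ℝ (Fin m)}
    (h : ν ∈ Submodule.span ℤ (typeARoots m))
    (hp : ∀ γ ∈ typeARoots m, ⟪γ, ν⟫ = -1 ∨ ⟪γ, ν⟫ = 0 ∨ ⟪γ, ν⟫ = 1) : ν = 0 := by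
  obtain ⟨w, hw, hsum⟩ := coordsA h
  have key : ∀ k l : Fin m, -1 ≤ w k - w l ∧ w k - w l ≤ 1 := by
    intro k l
    rcases eq_or_ne k l with rfl | hkl
    · omega
    · have h0 := hp _ ⟨k, l, hkl, rfl⟩
      rw [pairA, hw, hw] at h0
      have h1 : w k - w l = -1 ∨ w k - w l = 0 ∨ w k - w l = 1 := by
        rcases h0 with h | h | h <;> [left; (right; left); (right; right)] <;>
          (apply Int.cast_injective (α := ℝ); push_cast; linarith)
      omega
  have hzero : ∀ k, w k = 0 := by
    intro k
    have hmpos : (1 : ℤ) ≤ (m : ℤ) := by exact_mod_cast k.pos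
    have h1 : (m : ℤ) * w k = ∑ l : Fin m, (w k - w l) := by
      rw [Finset.sum_sub_distrib, hsum, Finset.sum_const, Finset.card_univ, Fintype.card_fin]
      simp [mul_comm]
    have hiteval : ∀ l : Fin m, (if l = k then (0:ℤ) else 1) = 1 - (if l = k then 1 else 0) := by
      intro l; split_ifs <;> ring
    have hsum_ite : ∑ l : Fin m, (if l = k then (0:ℤ) else 1) = (m : ℤ) - 1 := by
      rw [Finset.sum_congr rfl (fun l _ => hiteval l), Finset.sum_sub_distrib,
        Finset.sum_const, Finset.card_univ, Fintype.card_fin, Finset.sum_ite_eq']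
      simp
    have hub : ∑ l : Fin m, (w k - w l) ≤ (m : ℤ) - 1 := by
      rw [← hsum_ite]
      apply Finset.sum_le_sum
      intro l _
      rcases eq_or_ne l k with rfl | h
      · simp
      · simp only [h, if_false]
        exact (key k l).2
    have hlb : -((m : ℤ) - 1) ≤ ∑ l : Fin m, (w k - w l) := by
      have hsum_ite' : ∑ l : Fin m, (if l = k then (0:ℤ) else -1) = -((m : ℤ) - 1) := by
        have hiteval' : ∀ l : Fin m, (if l = k then (0:ℤ) else -1)
            = -(1 - (if l = k then 1 else 0)) := by
          intro l; split_ifs <;> ring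
        rw [Finset.sum_congr rfl (fun l _ => hiteval' l), Finset.sum_neg_distrib,
          Finset.sum_sub_distrib, Finset.sum_const, Finset.card_univ, Fintype.card_fin,
          Finset.sum_ite_eq']
        simp
      rw [← hsum_ite']
      apply Finset.sum_le_sum
      intro l _
      rcases eq_or_ne l k with rfl | h
      · simp
      · simp only [h, if_false]
        exact (key k l).1
    rw [← h1] at hub hlb
    rcases lt_trichotomy (w k) 0 with hneg | hz | hpos
    · have : (m : ℤ) * w k ≤ (m : ℤ) * (-1) :=
        mul_le_mul_of_nonneg_left (by omega) (by omega)
      nlinarith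
    · exact hz
    · have : (m : ℤ) * 1 ≤ (m : ℤ) * w k :=
        mul_le_mul_of_nonneg_left (by omega) (by omega)
      nlinarith
  ext k
  have : ν k = (0 : ℝ) := by rw [hw k, hzero k]; norm_num
  simpa using this

lemma lemD {m : ℕ} {ν : EuclideanSpace ℝ (Fin m)}
    (h : ν ∈ Submodule.span ℤ (typeDRoots m))
    (hp : ∀ γ ∈ typeDRoots m, ⟪γ, ν⟫ = -1 ∨ ⟪γ, ν⟫ = 0 ∨ ⟪γ, ν⟫ = 1) : ν = 0 := by
  rcases Nat.lt_or_ge m 2 with hm | hm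
  · -- no roots at all
    have hempty : typeDRoots m = ∅ := by
      ext v
      simp only [Set.mem_empty_iff_false, iff_false]
      rintro ⟨i, j, s, t, _, _, hij, _⟩
      exact hij (Fin.ext (by omega))
    rw [hempty, Submodule.span_empty, Submodule.mem_bot] at h
    exact h
  obtain ⟨w, hw, hsum⟩ := coordsD h
  have key : ∀ k l : Fin m, k ≠ l →
      (w k + w l = -1 ∨ w k + w l = 0 ∨ w k + w l = 1) ∧
      (w k - w l = -1 ∨ w k - w l = 0 ∨ w k - w l = 1) := by
    intro k l hkl
    constructor
    · have h0 := hp _ ⟨k, l, 1, 1, Or.inl rfl, Or.inl rfl, hkl, rfl⟩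
      rw [pairD, hw, hw] at h0
      simp only [one_mul] at h0
      rcases h0 with h | h | h <;> [left; (right; left); (right; right)] <;> exact_mod_cast h
    · have h0 := hp _ ⟨k, l, 1, -1, Or.inl rfl, Or.inr rfl, hkl, rfl⟩
      rw [pairD, hw, hw] at h0
      simp only [one_mul, neg_one_mul] at h0
      rcases h0 with h | h | h <;> [left; (right; left); (right; right)] <;>
        · rw [sub_eq_add_neg]; exact_mod_cast h
  have hzero : ∀ k, w k = 0 := by
    intro k
    by_contra hk
    have : Nontrivial (Fin m) := Fin.nontrivial_iff_two_le.mpr hm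
    have hex : ∃ l : Fin m, l ≠ k := exists_ne k
    obtain ⟨l, hl⟩ := hex
    -- every other coordinate is 0
    have hall : ∀ j, j ≠ k → w j = 0 := by
      intro j hj
      by_contra hwj
      obtain ⟨ha, hb⟩ := key k j (Ne.symm hj)
      rcases ha with h | h | h <;> rcases hb with h' | h' | h' <;> omega
    have hsum' : ∑ j, w j = w k := by
      rw [← Finset.sum_subset (Finset.subset_univ {k})]
      · simp
      · intro j _ hj
        exact hall j (by simpa using hj)
    rw [hsum'] at hsum
    obtain ⟨ha, hb⟩ := key k l (Ne.symm hl)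
    have hwl : w l = 0 := hall l hl
    obtain ⟨n, hn⟩ := hsum
    rcases ha with h | h | h <;> rcases hb with h' | h' | h' <;> omega
  ext k
  have : ν k = (0 : ℝ) := by rw [hw k, hzero k]; norm_num
  simpa using this

theorem no_nonzero_minuscule_element_in_coroot_lattice_of_type_A_or_D
    {V : Type*} [NormedAddCommGroup V] [InnerProductSpace ℝ V]
    {ι : Type*} (P : ι → Set V)
    -- the factors are mutually orthogonal
    (horth : ∀ i j : ι, i ≠ j → ∀ a ∈ P i, ∀ b ∈ P j, ⟪a, b⟫ = 0)
    -- each factor is (an isometric copy of) a root system of type A or type D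
    (htype : ∀ i : ι, ∃ (m : ℕ) (f : EuclideanSpace ℝ (Fin m) →ₗ[ℝ] V),
      (∀ x y : EuclideanSpace ℝ (Fin m), ⟪f x, f y⟫ = ⟪x, y⟫) ∧
      (P i = f '' typeARoots m ∨ P i = f '' typeDRoots m))
    (lam : V) (hlam : lam ∈ Submodule.span ℤ (⋃ i, P i)) (hne : lam ≠ 0) :
    ¬ ∀ γ ∈ ⋃ i, P i, ⟪γ, lam⟫ = -1 ∨ ⟪γ, lam⟫ = 0 ∨ ⟪γ, lam⟫ = 1 := by
  intro hmin
  rw [Submodule.span_iUnion, Submodule.mem_iSup_iff_exists_finsupp] at hlam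
  obtain ⟨c, hc, hcsum⟩ := hlam
  have hex : ∃ i₀, c i₀ ≠ 0 := by
    by_contra h
    push_neg at h
    apply hne
    rw [← hcsum]
    rw [Finsupp.sum]
    apply Finset.sum_eq_zero
    intro i _
    exact h i
  obtain ⟨i₀, hi₀⟩ := hex
  have horthspan : ∀ j, j ≠ i₀ → ∀ γ ∈ P i₀, ∀ x ∈ Submodule.span ℤ (P j), ⟪γ, x⟫ = 0 := by
    intro j hj γ hγ x hx
    induction hx using Submodule.span_induction with
    | mem y hy => exact horth i₀ j (Ne.symm hj) γ hγ y hy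
    | zero => exact inner_zero_right γ
    | add y z _ _ ihy ihz => rw [inner_add_right, ihy, ihz]; ring
    | smul a y _ ih =>
      have : (a : ℤ) • y = (a : ℝ) • y := by
        rw [← Int.cast_smul_eq_zsmul ℝ]
      rw [this, real_inner_smul_right, ih, mul_zero]
  have hpair : ∀ γ ∈ P i₀, ⟪γ, lam⟫ = ⟪γ, c i₀⟫ := by
    intro γ hγ
    rw [← hcsum, Finsupp.sum, inner_sum]
    rw [Finset.sum_eq_single i₀]
    · intro j hj hji
      exact horthspan j hji γ hγ (c j) (hc j)
    · intro h
      rw [Finsupp.notMem_support_iff.mp h, inner_zero_right]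
  set μ := c i₀ with hμ
  have hμspan : μ ∈ Submodule.span ℤ (P i₀) := hc i₀
  have hμmin : ∀ γ ∈ P i₀, ⟪γ, μ⟫ = -1 ∨ ⟪γ, μ⟫ = 0 ∨ ⟪γ, μ⟫ = 1 := by
    intro γ hγ
    rw [← hpair γ hγ]
    exact hmin γ (Set.mem_iUnion.mpr ⟨i₀, hγ⟩)
  obtain ⟨m, f, hf, hPD⟩ := htype i₀
  have hfinj : ∀ x : EuclideanSpace ℝ (Fin m), f x = 0 → x = 0 := by
    intro x hx
    have : ⟪x, x⟫ = 0 := by rw [← hf, hx, inner_zero_left]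
    exact inner_self_eq_zero.mp this
  have main : ∀ S : Set (EuclideanSpace ℝ (Fin m)), P i₀ = f '' S →
      (∀ ν : EuclideanSpace ℝ (Fin m), ν ∈ Submodule.span ℤ S →
        (∀ γ ∈ S, ⟪γ, ν⟫ = -1 ∨ ⟪γ, ν⟫ = 0 ∨ ⟪γ, ν⟫ = 1) → ν = 0) → False := by
    intro S hP hlem
    rw [hP] at hμspan
    have himg : f '' S = ⇑(f.restrictScalars ℤ) '' S := rfl
    rw [himg, Submodule.span_image] at hμspan
    obtain ⟨ν, hν, hfν⟩ := hμspan
    have hνmin : ∀ γ' ∈ S, ⟪γ', ν⟫ = -1 ∨ ⟪γ', ν⟫ = 0 ∨ ⟪γ', ν⟫ = 1 := by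
      intro γ' hγ'
      have : f γ' ∈ P i₀ := hP ▸ Set.mem_image_of_mem f hγ'
      have := hμmin (f γ') this
      rw [← hfν] at this
      rwa [show (f.restrictScalars ℤ) ν = f ν from rfl, hf] at this
    have := hlem ν hν hνmin
    apply hi₀
    rw [← hμ.symm] at *
    rw [← hfν, this]
    simp
  rcases hPD with hP | hP
  · exact main _ hP (fun ν hν hp => lemA hν hp)
  · exact main _ hP (fun ν hν hp => lemD hν hp)
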